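/- Let R be a ring and M a right R-module. M is not a V-module if and only if there exists a submodule N of M such that the quotient M/N is uniform, the socle Soc(M/N) is a simple module, and M/N ≠ Soc(M/N). -/

import Mathlib

universe u v w

section Defs

variable (A : Type u) [Ring A]

/-- The radical of a module: the intersection of all maximal submodules
(`⊤` if there are none). -/
def modRad (M : Type w) [AddCommGroup M] [Module A M] : Submodule A M :=
  sInf {P : Submodule A M | IsCoatom P}

/-- The socle of a module: the sum of all simple submodules. -/
def modSocle (M : Type w) [AddCommGroup M] [Module A M] : Submodule A M :=
  sSup {S : Submodule A M | IsAtom S}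

/-- A submodule `N` of `M` is small if `N ⊔ K = ⊤` implies `K = ⊤`. -/
def IsSmallSubmodule {M : Type w} [AddCommGroup M] [Module A M] (N : Submodule A M) : Prop :=
  ∀ K : Submodule A M, N ⊔ K = ⊤ → K = ⊤

/-- `N` is a direct summand of `M`. -/
def IsDirectSummand {M : Type w} [AddCommGroup M] [Module A M] (N : Submodule A M) : Prop :=
  ∃ N' : Submodule A M, IsCompl N N'

/-- `N` is an essential submodule of `M`. -/
def IsEssentialSubmodule {M : Type w} [AddCommGroup M] [Module A M] (N : Submodule A M) : Prop :=
  ∀ K : Submodule A M, K ≠ ⊥ → N ⊓ K ≠ ⊥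

/-- An `I₀`-module: every non-small submodule contains a nonzero direct summand. -/
def IsI0Module (M : Type w) [AddCommGroup M] [Module A M] : Prop :=
  ∀ N : Submodule A M, ¬ IsSmallSubmodule A N →
    ∃ D : Submodule A M, D ≠ ⊥ ∧ D ≤ N ∧ IsDirectSummand A D

/-- A `V`-module: every proper submodule is an intersection of maximal submodules. -/
def IsVModule (M : Type w) [AddCommGroup M] [Module A M] : Prop :=
  ∀ N : Submodule A M, N ≠ ⊤ →
    ∃ S : Set (Submodule A M), (∀ P ∈ S, IsCoatom P) ∧ N = sInf S

/-- A local module: it has a proper submodule containing every proper submodule. -/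
def IsLocalModule (M : Type w) [AddCommGroup M] [Module A M] : Prop :=
  ∃ P : Submodule A M, P ≠ ⊤ ∧ ∀ K : Submodule A M, K ≠ ⊤ → K ≤ P

/-- A module of composition length two: it has a submodule which is simultaneously an atom
and a coatom of its submodule lattice, i.e. a composition series `0 ⋖ S ⋖ M`. -/
def HasLengthTwo (M : Type w) [AddCommGroup M] [Module A M] : Prop :=
  ∃ S : Submodule A M, IsAtom S ∧ IsCoatom S

/-- A uniform module: nonzero, and any two nonzero submodules intersect nontrivially. -/
def IsUniformModule (M : Type w) [AddCommGroup M] [Module A M] : Prop :=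
  Nontrivial M ∧ ∀ K L : Submodule A M, K ≠ ⊥ → L ≠ ⊥ → K ⊓ L ≠ ⊥

/-- A uniserial module: submodules are linearly ordered by inclusion. -/
def IsUniserialModule (M : Type w) [AddCommGroup M] [Module A M] : Prop :=
  ∀ K L : Submodule A M, K ≤ L ∨ L ≤ K

/-- A semiartinian module: every nonzero quotient has a nonzero socle. -/
def IsSemiartinianModule (M : Type w) [AddCommGroup M] [Module A M] : Prop :=
  ∀ N : Submodule A M, N ≠ ⊤ → modSocle A (M ⧸ N) ≠ ⊥

/-- `U` is `M`-injective: homomorphisms from submodules of `M` to `U` extend to `M`. -/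
def RelInjective (M : Type v) (U : Type w) [AddCommGroup M] [Module A M]
    [AddCommGroup U] [Module A U] : Prop :=
  ∀ (K : Submodule A M) (f : K →ₗ[A] U), ∃ g : M →ₗ[A] U, ∀ x : K, g (x : M) = f x

/-- `P` is `M`-projective: homomorphisms from `P` to quotients of `M` lift to `M`. -/
def RelProjective (M : Type v) (P : Type w) [AddCommGroup M] [Module A M]
    [AddCommGroup P] [Module A P] : Prop :=
  ∀ (K : Submodule A M) (f : P →ₗ[A] M ⧸ K), ∃ h : P →ₗ[A] M, ∀ x : P, K.mkQ (h x) = f x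

/-- `M` is almost `N`-projective. -/
def AlmostNProjective (M : Type v) (N : Type w) [AddCommGroup M] [Module A M]
    [AddCommGroup N] [Module A N] : Prop :=
  ∀ (K : Submodule A N) (f : M →ₗ[A] N ⧸ K),
    (∃ h : M →ₗ[A] N, ∀ x : M, K.mkQ (h x) = f x) ∨
    (∃ N' : Submodule A N, N' ≠ ⊥ ∧ IsDirectSummand A N' ∧
      ∃ h' : N' →ₗ[A] M, ∀ x : N', K.mkQ (x : N) = f (h' x))

/-- `M` is almost projective: almost `N`-projective for every module `N`. -/
def IsAlmostProjective (M : Type w) [AddCommGroup M] [Module A M] : Prop :=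
  ∀ (N : Type v) [AddCommGroup N] [Module A N], AlmostNProjective A M N

/-- `M` is almost `N`-injective. -/
def AlmostNInjective (M : Type v) (N : Type w) [AddCommGroup M] [Module A M]
    [AddCommGroup N] [Module A N] : Prop :=
  ∀ (N₀ : Submodule A N) (f : N₀ →ₗ[A] M),
    (∃ g : N →ₗ[A] M, ∀ x : N₀, g (x : N) = f x) ∨
    (∃ π : Module.End A N, IsIdempotentElem π ∧ π ≠ 0 ∧
      ∃ h : M →ₗ[A] LinearMap.range π, ∀ x : N₀, (↑(h (f x)) : N) = π (x : N))

/-- `M` is almost injective: almost `N`-injective for every module `N`. -/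
def IsAlmostInjective (M : Type w) [AddCommGroup M] [Module A M] : Prop :=
  ∀ (N : Type v) [AddCommGroup N] [Module A N], AlmostNInjective A M N

/-- `N` belongs to `σ(M)`: `N` is isomorphic to a submodule of a quotient of a direct sum
of copies of `M`. -/
def InSigma (M : Type v) [AddCommGroup M] [Module A M]
    (N : Type w) [AddCommGroup N] [Module A N] : Prop :=
  ∃ (ι : Type v) (K : Submodule A (ι →₀ M)) (P : Submodule A ((ι →₀ M) ⧸ K)),
    Nonempty (N ≃ₗ[A] P)

/-- `P` is a projective object of the category `σ(M)`. -/
def ProjInSigma (M : Type v) [AddCommGroup M] [Module A M]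
    (P : Type w) [AddCommGroup P] [Module A P] : Prop :=
  InSigma A M P ∧
  ∀ (X Y : Type v) [AddCommGroup X] [Module A X] [AddCommGroup Y] [Module A Y],
    InSigma A M X → InSigma A M Y →
    ∀ (g : X →ₗ[A] Y), Function.Surjective g →
    ∀ f : P →ₗ[A] Y, ∃ h : P →ₗ[A] X, ∀ x : P, g (h x) = f x

/-- `M` is an almost `V`-module: every simple module is almost `N`-injective
for every `N ∈ σ(M)`. -/
def IsAlmostVModule (M : Type v) [AddCommGroup M] [Module A M] : Prop :=
  ∀ (S : Type v) [AddCommGroup S] [Module A S], IsSimpleModule A S →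
    ∀ (N : Type v) [AddCommGroup N] [Module A N], InSigma A M N → AlmostNInjective A S N

end Defs

section Aux

variable {A : Type u} [Ring A] {M : Type w} [AddCommGroup M] [Module A M]

/-- If `K` is a coatom of `M` containing `N`, its image in `M ⧸ N` is a coatom. -/
lemma isCoatom_map_mkQ {N K : Submodule A M} (hNK : N ≤ K) (hK : IsCoatom K) :
    IsCoatom (K.map N.mkQ) := by
  constructor
  · intro h
    apply hK.1
    have : Submodule.comap N.mkQ (K.map N.mkQ) = Submodule.comap N.mkQ ⊤ := by rw [h]
    rw [Submodule.comap_map_mkQ, Submodule.comap_top, sup_eq_right.mpr hNK] at this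
    exact this
  · intro L hL
    have hsurj : Function.Surjective N.mkQ := N.mkQ_surjective
    have h1 : K ≤ Submodule.comap N.mkQ L := by
      refine le_trans ?_ (Submodule.comap_mono hL.le)
      intro x hx
      exact Submodule.mem_comap.mpr (Submodule.mem_map_of_mem hx)
    have h2 : K ≠ Submodule.comap N.mkQ L := by
      intro h
      apply hL.ne
      rw [h, Submodule.map_comap_eq_of_surjective hsurj]
    have := hK.2 _ (lt_of_le_of_ne h1 h2)
    rw [← Submodule.map_comap_eq_of_surjective hsurj L, this, Submodule.map_top,
      Submodule.range_mkQ]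

/-- A V-module has zero radical in every proper quotient. -/
lemma rad_quot_eq_bot_of_V (hV : IsVModule A M) {N : Submodule A M} (hN : N ≠ ⊤) :
    modRad A (M ⧸ N) = ⊥ := by
  obtain ⟨S, hScoatom, rfl⟩ := hV N hN
  have hsurj : Function.Surjective (sInf S).mkQ := (sInf S).mkQ_surjective
  have key : Submodule.comap (sInf S).mkQ (modRad A (M ⧸ sInf S)) ≤ sInf S := by
    apply le_sInf
    intro P hP
    have h1 : modRad A (M ⧸ sInf S) ≤ P.map (sInf S).mkQ :=
      sInf_le (isCoatom_map_mkQ (sInf_le hP) (hScoatom P hP))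
    calc Submodule.comap (sInf S).mkQ (modRad A (M ⧸ sInf S))
        ≤ Submodule.comap (sInf S).mkQ (P.map (sInf S).mkQ) := Submodule.comap_mono h1
      _ = sInf S ⊔ P := Submodule.comap_map_mkQ _ _
      _ = P := sup_eq_right.mpr (sInf_le hP)
  have := Submodule.map_mono key (f := (sInf S).mkQ)
  rw [Submodule.map_comap_eq_of_surjective hsurj] at this
  refine le_bot_iff.mp (le_trans this ?_)
  rw [Submodule.map_le_iff_le_comap, Submodule.comap_bot, Submodule.ker_mkQ]

/-- The image of a coatom of `M ⧸ N` under `comap mkQ` is a coatom of `M`. -/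
lemma isCoatom_comap_mkQ {N : Submodule A M} {Q : Submodule A (M ⧸ N)} (hQ : IsCoatom Q) :
    IsCoatom (Q.comap N.mkQ) := by
  have hsurj : Function.Surjective N.mkQ := N.mkQ_surjective
  constructor
  · intro h
    apply hQ.1
    rw [← Submodule.map_comap_eq_of_surjective hsurj Q, h, Submodule.map_top,
      Submodule.range_mkQ]
  · intro L hL
    have hker0 : N ≤ Submodule.comap N.mkQ Q := by
      intro y hy
      show N.mkQ y ∈ Q
      rw [Submodule.mkQ_apply, (Submodule.Quotient.mk_eq_zero N).mpr hy]
      exact Q.zero_mem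
    have hker : N ≤ L := le_trans hker0 hL.le
    have h1 : Q ≤ L.map N.mkQ := by
      conv_lhs => rw [← Submodule.map_comap_eq_of_surjective hsurj Q]
      exact Submodule.map_mono hL.le
    have h2 : Q ≠ L.map N.mkQ := by
      intro h
      apply hL.ne
      have : Submodule.comap N.mkQ Q = Submodule.comap N.mkQ (L.map N.mkQ) := by rw [h]
      rw [Submodule.comap_map_mkQ, sup_eq_right.mpr hker] at this
      exact this
    have := hQ.2 _ (lt_of_le_of_ne h1 h2)
    have h3 : Submodule.comap N.mkQ (L.map N.mkQ) = Submodule.comap N.mkQ ⊤ := by rw [this]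
    rw [Submodule.comap_map_mkQ, sup_eq_right.mpr hker, Submodule.comap_top] at h3
    exact h3

lemma comap_sInf_eq {M₂ : Type v} [AddCommGroup M₂] [Module A M₂] (f : M →ₗ[A] M₂)
    (S : Set (Submodule A M₂)) :
    Submodule.comap f (sInf S) = sInf (Submodule.comap f '' S) := by
  ext x
  simp [Submodule.mem_sInf]

lemma not_VModule_iff_aux :
    ¬ IsVModule A M ↔
      ∃ N : Submodule A M, IsUniformModule A (M ⧸ N) ∧
        IsSimpleModule A ↥(modSocle A (M ⧸ N)) ∧
        modSocle A (M ⧸ N) ≠ ⊤ := by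
  constructor
  · intro hV
    simp only [IsVModule, not_forall] at hV
    obtain ⟨N, hNtop, hNint⟩ := hV
    -- The radical of `M ⧸ N` is nonzero
    have hRad : modRad A (M ⧸ N) ≠ ⊥ := by
      intro h
      apply hNint
      refine ⟨Submodule.comap N.mkQ '' {P : Submodule A (M ⧸ N) | IsCoatom P}, ?_, ?_⟩
      · rintro P ⟨Q, hQ, rfl⟩
        exact isCoatom_comap_mkQ hQ
      · rw [← comap_sInf_eq]
        change N = Submodule.comap N.mkQ (modRad A (M ⧸ N))
        rw [h, Submodule.comap_bot, Submodule.ker_mkQ]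
    obtain ⟨xb, hxbRad, hxb0⟩ := Submodule.exists_mem_ne_zero_of_ne_bot hRad
    obtain ⟨x, rfl⟩ := N.mkQ_surjective xb
    have hxN : x ∉ N := by
      intro h
      exact hxb0 ((Submodule.Quotient.mk_eq_zero N).mpr h)
    -- Zorn's lemma: a submodule maximal with respect to containing `N` and avoiding `x`
    obtain ⟨K, -, hKmax⟩ := zorn_le_nonempty₀
      {K : Submodule A M | N ≤ K ∧ x ∉ K}
      (fun c hcs hchain y hy => by
        refine ⟨sSup c, ⟨le_trans (hcs hy).1 (le_sSup hy), ?_⟩, fun z hz => le_sSup hz⟩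
        intro hx
        obtain ⟨K, hKc, hxK⟩ := (Submodule.mem_sSup_of_directed ⟨y, hy⟩
          hchain.directedOn).1 hx
        exact (hcs hKc).2 hxK)
      N ⟨le_rfl, hxN⟩
    obtain ⟨⟨hNK, hxK⟩, hKmax⟩ := hKmax
    have hxbK : (K.mkQ x : M ⧸ K) ≠ 0 := by
      intro h
      exact hxK ((Submodule.Quotient.mk_eq_zero K).mp h)
    -- every nonzero submodule of `M ⧸ K` contains the image of `x`
    have hmem : ∀ T : Submodule A (M ⧸ K), T ≠ ⊥ → K.mkQ x ∈ T := by
      intro T hT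
      obtain ⟨t, htT, ht0⟩ := Submodule.exists_mem_ne_zero_of_ne_bot hT
      obtain ⟨y, rfl⟩ := K.mkQ_surjective t
      have hyK : y ∉ K := fun h => ht0 ((Submodule.Quotient.mk_eq_zero K).mpr h)
      have hKL : K ≤ Submodule.comap K.mkQ T := by
        intro y hy
        show K.mkQ y ∈ T
        rw [Submodule.mkQ_apply, (Submodule.Quotient.mk_eq_zero K).mpr hy]
        exact T.zero_mem
      have hxL : x ∈ Submodule.comap K.mkQ T := by
        by_contra hxL
        exact hyK (hKmax ⟨le_trans hNK hKL, hxL⟩ hKL htT)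
      exact hxL
    set S₀ : Submodule A (M ⧸ K) := Submodule.span A {K.mkQ x} with hS₀def
    have hS₀bot : S₀ ≠ ⊥ := by
      intro h
      have hx0 : K.mkQ x ∈ S₀ := Submodule.mem_span_singleton_self _
      rw [h, Submodule.mem_bot] at hx0
      exact hxbK hx0
    have hS₀le : ∀ T : Submodule A (M ⧸ K), T ≠ ⊥ → S₀ ≤ T := by
      intro T hT
      rw [hS₀def, Submodule.span_le, Set.singleton_subset_iff]
      exact hmem T hT
    have hS₀atom : IsAtom S₀ := by
      refine ⟨hS₀bot, fun T hT => ?_⟩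
      by_contra hTbot
      exact absurd (hS₀le T hTbot) (not_le_of_gt hT)
    have hSocle : modSocle A (M ⧸ K) = S₀ := by
      refine le_antisymm (sSup_le fun T hT => ?_) (le_sSup hS₀atom)
      rcases lt_or_eq_of_le (hS₀le T hT.1) with h | h
      · exact absurd (hT.2 _ h) hS₀bot
      · exact h.ge
    refine ⟨K, ⟨?_, ?_⟩, ?_, ?_⟩
    · exact nontrivial_of_ne _ _ hxbK
    · intro T L hT hL h
      exact hS₀bot (le_bot_iff.mp (h ▸ le_inf (hS₀le T hT) (hS₀le L hL)))
    · rw [hSocle]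
      exact isSimpleModule_iff_isAtom.mpr hS₀atom
    · rw [hSocle]
      intro hS₀top
      -- then `K` would be a maximal submodule of `M`, contradicting `x ∈ Rad(M ⧸ N)`
      haveI : Nontrivial (Submodule A (M ⧸ K)) :=
        ⟨⊥, ⊤, fun h => hS₀bot (by rw [hS₀top, ← h])⟩
      have hsimple : IsSimpleModule A (M ⧸ K) := by
        refine IsSimpleModule.mk (toIsSimpleOrder := ⟨fun T => ?_⟩)
        rcases lt_or_eq_of_le (le_top : T ≤ ⊤) with h | h
        · exact Or.inl (hS₀atom.2 T (hS₀top ▸ h))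
        · exact Or.inr h
      have hKcoatom : IsCoatom K := isSimpleModule_iff_isCoatom.mp hsimple
      have hle : modRad A (M ⧸ N) ≤ K.map N.mkQ := sInf_le (isCoatom_map_mkQ hNK hKcoatom)
      obtain ⟨y, hyK, hy⟩ := hle hxbRad
      have : x - y ∈ N := by
        rw [← Submodule.Quotient.mk_eq_zero N, Submodule.Quotient.mk_sub]
        change N.mkQ x - N.mkQ y = 0
        rw [hy, sub_self]
      have : x ∈ K := by
        have hx : x = (x - y) + y := by abel
        rw [hx]
        exact K.add_mem (hNK this) hyK
      exact hxK this
  · rintro ⟨N, ⟨hNontriv, hUnif⟩, hSocSimple, hSocTop⟩ hV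
    have hNtop : N ≠ ⊤ := by
      intro h
      rw [h] at hNontriv
      have : Subsingleton (M ⧸ (⊤ : Submodule A M)) :=
        Submodule.Quotient.subsingleton_iff.mpr rfl
      exact not_subsingleton_iff_nontrivial.mpr hNontriv this
    have hRad : modRad A (M ⧸ N) = ⊥ := rad_quot_eq_bot_of_V hV hNtop
    have hAtom : IsAtom (modSocle A (M ⧸ N)) := isSimpleModule_iff_isAtom.mp hSocSimple
    have hle : modSocle A (M ⧸ N) ≤ modRad A (M ⧸ N) := by
      apply le_sInf
      intro P hP
      have hPbot : P ≠ ⊥ := by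
        intro h
        exact hSocTop (hP.2 _ (h ▸ hAtom.1.bot_lt))
      have hinf : modSocle A (M ⧸ N) ⊓ P ≠ ⊥ := hUnif _ _ hAtom.1 hPbot
      rcases lt_or_eq_of_le (inf_le_left : modSocle A (M ⧸ N) ⊓ P ≤ modSocle A (M ⧸ N))
        with h | h
      · exact absurd (hAtom.2 _ h) hinf
      · exact inf_eq_left.mp h
    rw [hRad, le_bot_iff] at hle
    exact hAtom.1 hle

end Aux

/-- Lemma 2.1: `M` is not a `V`-module iff there is a submodule `N ≤ M` such that `M/N` is
uniform, `Soc(M/N)` is simple, and `M/N ≠ Soc(M/N)`. -/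
theorem not_VModule_iff (R : Type u) [Ring R] (M : Type v) [AddCommGroup M]
    [Module Rᵐᵒᵖ M] :
    ¬ IsVModule Rᵐᵒᵖ M ↔
      ∃ N : Submodule Rᵐᵒᵖ M, IsUniformModule Rᵐᵒᵖ (M ⧸ N) ∧
        IsSimpleModule Rᵐᵒᵖ ↥(modSocle Rᵐᵒᵖ (M ⧸ N)) ∧
        modSocle Rᵐᵒᵖ (M ⧸ N) ≠ ⊤ := by
  exact not_VModule_iff_aux
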